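/- Let G = (V,E) be a finite simple graph, k a natural number, and S ⊆ V with |S| ≤ 3k such that G − S is a cluster graph. Let C₁ and C₂ be the vertex sets of two distinct connected components of G − S with |C₁| − |C₂| > 4k. Then every X ⊆ V with |X| ≤ k such that G − X is a uniform cluster graph satisfies C₂ ⊆ X. -/

import Mathlib

namespace Paper

/-- The graph `G - S` obtained from `G` by deleting the vertices of `S`: edges of `G`
with both endpoints outside `S` (vertices of `S` become isolated). -/
def restrictOutside {V : Type*} (G : SimpleGraph V) (S : Set V) : SimpleGraph V where
  Adj x y := G.Adj x y ∧ x ∉ S ∧ y ∉ S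
  symm := ⟨fun _ _ h => ⟨h.1.symm, h.2.2, h.2.1⟩⟩
  loopless := ⟨fun x h => G.loopless.irrefl x h.1⟩

/-- The vertex set of the connected component of `v` in `G`. -/
def compSet {V : Type*} (G : SimpleGraph V) (v : V) : Set V := {w | G.Reachable v w}

/-- A cluster graph: no induced `P₃`; equivalently, every connected component induces a clique. -/
def IsClusterGraph {V : Type*} (G : SimpleGraph V) : Prop :=
  ∀ ⦃x y z : V⦄, G.Adj x y → G.Adj y z → x ≠ z → G.Adj x z

/-- `G - X` is a disjoint union of cliques each on exactly `c` vertices. -/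
def IsUniformClusterDel {V : Type*} (G : SimpleGraph V) (X : Set V) (c : ℕ) : Prop :=
  ∀ w ∉ X, (restrictOutside G X).IsClique (compSet (restrictOutside G X) w) ∧
    (compSet (restrictOutside G X) w).ncard = c

lemma reach_notMem {V : Type*} {G : SimpleGraph V} {X : Set V} {u w : V}
    (h : (restrictOutside G X).Reachable u w) (hu : u ∉ X) : w ∉ X := by
  obtain ⟨p⟩ := h
  induction p with
  | nil => exact hu
  | cons h p ih => exact ih h.2.2

lemma cluster_reach {V : Type*} {G' : SimpleGraph V} (hc : IsClusterGraph G')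
    {x y : V} (h : G'.Reachable x y) : x = y ∨ G'.Adj x y := by
  obtain ⟨p⟩ := h
  induction p with
  | nil => exact Or.inl rfl
  | @cons u b w h p ih =>
    rcases ih with rfl | hadj
    · exact Or.inr h
    · rcases eq_or_ne u w with rfl | hne
      · exact Or.inl rfl
      · exact Or.inr (hc h hadj hne)

/-- If `|S| ≤ 3k`, `G - S` is a cluster graph, and `C₁, C₂` are vertex sets of two distinct
connected components of `G - S` with `|C₁| - |C₂| > 4k`, then every `X` with `|X| ≤ k` such
that `G - X` is a uniform cluster graph satisfies `C₂ ⊆ X`. -/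
theorem stmt4 {V : Type*} [Fintype V] (G : SimpleGraph V) (k : ℕ) (S : Set V)
    (hScard : S.ncard ≤ 3 * k)
    (hcluster : IsClusterGraph (restrictOutside G S))
    (v₁ v₂ : V) (hv₁ : v₁ ∉ S) (hv₂ : v₂ ∉ S)
    (C₁ C₂ : Set V)
    (hC₁ : C₁ = compSet (restrictOutside G S) v₁)
    (hC₂ : C₂ = compSet (restrictOutside G S) v₂)
    (hne : C₁ ≠ C₂)
    (hgap : C₂.ncard + 4 * k < C₁.ncard)
    (X : Set V) (hXcard : X.ncard ≤ k)
    (hX : ∃ c, IsUniformClusterDel G X c) :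
    C₂ ⊆ X := by
  subst hC₁ hC₂
  obtain ⟨c, hc⟩ := hX
  intro u huC₂
  by_contra huX
  have hu_S : u ∉ S := reach_notMem huC₂ hv₂
  obtain ⟨hDclique, hDcard⟩ := hc u huX
  -- upper bound: c ≤ |C₂| + |S|
  have huD : u ∈ compSet (restrictOutside G X) u := SimpleGraph.Reachable.refl u
  have hD_sub : compSet (restrictOutside G X) u ⊆ compSet (restrictOutside G S) v₂ ∪ S := by
    intro w hw
    by_cases hwS : w ∈ S
    · exact Or.inr hwS
    · left
      rcases eq_or_ne u w with rfl | hne'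
      · exact huC₂
      · have hadj : (restrictOutside G X).Adj u w := hDclique huD hw hne'
        have hadjS : (restrictOutside G S).Adj u w := ⟨hadj.1, hu_S, hwS⟩
        exact (huC₂ : (restrictOutside G S).Reachable v₂ u).trans hadjS.reachable
  have hub : c ≤ (compSet (restrictOutside G S) v₂).ncard + S.ncard := by
    calc c = (compSet (restrictOutside G X) u).ncard := hDcard.symm
    _ ≤ ((compSet (restrictOutside G S) v₂) ∪ S).ncard :=
        Set.ncard_le_ncard hD_sub (Set.toFinite _)
    _ ≤ _ := Set.ncard_union_le _ _
  -- lower bound: |C₁| - |X| ≤ c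
  have hv₂mem : v₂ ∈ compSet (restrictOutside G S) v₂ := SimpleGraph.Reachable.refl v₂
  have hC₂pos : 1 ≤ (compSet (restrictOutside G S) v₂).ncard :=
    (Set.ncard_pos (Set.toFinite _)).mpr ⟨v₂, hv₂mem⟩
  obtain ⟨w, hwC₁, hwX⟩ : ∃ w ∈ compSet (restrictOutside G S) v₁, w ∉ X := by
    by_contra h
    push_neg at h
    have := Set.ncard_le_ncard h (Set.toFinite X)
    omega
  have hw_S : w ∉ S := reach_notMem hwC₁ hv₁
  have hsub1 : compSet (restrictOutside G S) v₁ \ X ⊆ compSet (restrictOutside G X) w := by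
    intro y hy
    rcases eq_or_ne w y with rfl | hne'
    · exact SimpleGraph.Reachable.refl _
    · have hy_S : y ∉ S := reach_notMem hy.1 hv₁
      have hreach : (restrictOutside G S).Reachable w y :=
        (hwC₁ : (restrictOutside G S).Reachable v₁ w).symm.trans hy.1
      have hadjS := (cluster_reach hcluster hreach).resolve_left hne'
      exact (SimpleGraph.Adj.reachable (⟨hadjS.1, hwX, hy.2⟩ :
        (restrictOutside G X).Adj w y))
  have hlb : (compSet (restrictOutside G S) v₁ \ X).ncard ≤ c := by
    rw [← (hc w hwX).2]
    exact Set.ncard_le_ncard hsub1 (Set.toFinite _)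
  have hdiff : (compSet (restrictOutside G S) v₁).ncard ≤
      (compSet (restrictOutside G S) v₁ \ X).ncard + X.ncard :=
    Set.ncard_le_ncard_diff_add_ncard _ _ (Set.toFinite _)
  omega

end Paper
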